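/- Let X be a connected Alexandroff space and A a subspace such that the inclusion A ↪ X induces the trivial map π₁(A,a) → π₁(X,a) for every basepoint a ∈ A. Then there exists a maximal tree T of X such that the functor F_T : X → π₁(X,x₀) is trivial on A, i.e., F_T sends every relation a ≤ a' with a, a' ∈ A to the identity element. -/

import Mathlib

open CategoryTheory

universe v u

/-- A subcategory of a category `C`, given by a set of objects and sets of morphisms closed
under identities and composition. -/
structure Subcat (C : Type u) [Category.{v} C] : Type (max u v) where
  objs : Set C
  homs : ∀ x y : C, Set (x ⟶ y)
  src_mem : ∀ {x y : C} {f : x ⟶ y}, f ∈ homs x y → x ∈ objs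
  tgt_mem : ∀ {x y : C} {f : x ⟶ y}, f ∈ homs x y → y ∈ objs
  id_mem : ∀ x ∈ objs, 𝟙 x ∈ homs x x
  comp_mem : ∀ {x y z : C} {f : x ⟶ y} {g : y ⟶ z},
    f ∈ homs x y → g ∈ homs y z → f ≫ g ∈ homs x z

namespace Subcat
variable {C : Type u} [Category.{v} C] (S : Subcat C)

/-- The underlying category of a subcategory. -/
def carrier : Type u := {x : C // x ∈ S.objs}

instance : Category.{v} S.carrier where
  Hom a b := {f : a.1 ⟶ b.1 // f ∈ S.homs a.1 b.1}
  id a := ⟨𝟙 a.1, S.id_mem a.1 a.2⟩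
  comp f g := ⟨f.1 ≫ g.1, S.comp_mem f.2 g.2⟩
  id_comp f := Subtype.ext (Category.id_comp f.1)
  comp_id f := Subtype.ext (Category.comp_id f.1)
  assoc f g h := Subtype.ext (Category.assoc f.1 g.1 h.1)

/-- The inclusion functor of a subcategory. -/
def incl : S.carrier ⥤ C where
  obj x := x.1
  map f := f.1
  map_id _ := rfl
  map_comp _ _ := rfl

end Subcat

/-- A category is indiscrete if there is exactly one morphism between any two objects. -/
def IsIndiscrete (D : Type*) [Category D] : Prop := ∀ x y : D, ∃! _f : x ⟶ y, True

/-- A small category is a tree if its localization (at all of its morphisms) is indiscrete. -/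
def IsTree (T : Type*) [Category T] : Prop :=
  IsIndiscrete ((⊤ : MorphismProperty T).Localization)

/-- The localization of a category at all of its morphisms. -/
abbrev LocCat (C : Type u) [Category.{v} C] := ((⊤ : MorphismProperty C)).Localization

/-- The canonical functor to the localization. -/
abbrev locQ (C : Type u) [Category.{v} C] : C ⥤ LocCat C := ((⊤ : MorphismProperty C)).Q

/-- The functor `LD → LC` induced on localizations by a functor `D ⥤ C`. -/
noncomputable def locMap {D : Type u} [Category.{v} D] {C : Type u} [Category.{v} C]
    (F : D ⥤ C) : LocCat D ⥤ LocCat C :=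
  CategoryTheory.Localization.Construction.lift (F ⋙ locQ C)
    (fun _ _ f _ => (⊤ : MorphismProperty C).Q_inverts (F.map f) (by trivial))

theorem locMap_obj {D : Type u} [Category.{v} D] {C : Type u} [Category.{v} C]
    (F : D ⥤ C) (x : D) :
    (locMap F).obj ((locQ D).obj x) = (locQ C).obj (F.obj x) :=
  CategoryTheory.Functor.congr_obj
    (CategoryTheory.Localization.Construction.fac (F ⋙ locQ C)
      (fun _ _ f _ => (⊤ : MorphismProperty C).Q_inverts (F.map f) (by trivial))) x

/-- The inclusion of a subspace of an Alexandroff space (i.e. of a subset of a preordered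
set), as a functor between the associated thin categories. -/
def inclFunctor {X : Type u} [Preorder X] (A : Set X) : ↥A ⥤ X :=
  Monotone.functor (f := (Subtype.val : ↥A → X)) (fun _ _ h => h)


/-! ### Auxiliary development -/

section Auxiliary

attribute [local instance] Classical.propDecidable

instance preorderHom_subsingleton {P : Type*} [Preorder P] (x y : P) :
    Subsingleton (x ⟶ y) :=
  ⟨fun ⟨⟨_⟩⟩ ⟨⟨_⟩⟩ => rfl⟩

instance subcatHom_subsingleton {C : Type u} [Category.{v} C]
    [∀ x y : C, Subsingleton (x ⟶ y)] (S : Subcat C) (a b : S.carrier) :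
    Subsingleton (a ⟶ b) :=
  ⟨fun f g => Subtype.ext (Subsingleton.elim f.1 g.1)⟩

instance locCat_isIso {C : Type u} [Category.{v} C] {a b : LocCat C} (f : a ⟶ b) :
    IsIso f := by
  have h : MorphismProperty.isomorphisms (LocCat C) = ⊤ := by
    apply Localization.Construction.morphismProperty_eq_top'
    · intro x y f
      exact (⊤ : MorphismProperty C).Q_inverts f trivial
    · intro x y e he
      exact inferInstanceAs (IsIso e.inv)
  have h2 : MorphismProperty.isomorphisms (LocCat C) f := by rw [h]; trivial
  exact h2

/-- The indiscrete category on a type. -/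
structure IndC (α : Type u) : Type u where
  as : α

instance IndC.category (α : Type u) : Category.{u} (IndC α) where
  Hom _ _ := PUnit
  id _ := PUnit.unit
  comp _ _ := PUnit.unit

instance IndC.homSubsingleton {α : Type u} (a b : IndC α) : Subsingleton (a ⟶ b) :=
  ⟨fun f g => Subsingleton.elim (α := PUnit) f g⟩

instance IndC.isIso {α : Type u} {a b : IndC α} (f : a ⟶ b) : IsIso f :=
  ⟨PUnit.unit, rfl, rfl⟩

/-- The canonical functor to the indiscrete category. -/
def toIndC (C : Type u) [Category.{v} C] : C ⥤ IndC C where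
  obj x := ⟨x⟩
  map _ := PUnit.unit

theorem isTree_of_coherent {T : Type u} [Category.{v} T] (r : T)
    (c : ∀ x : T, ((locQ T).obj r ⟶ (locQ T).obj x))
    (hc : ∀ {x y : T} (f : x ⟶ y), c x ≫ (locQ T).map f = c y) :
    IsTree T := by
  have hinv : (⊤ : MorphismProperty T).IsInvertedBy (toIndC T) := fun x y f _ => inferInstance
  let F : LocCat T ⥤ IndC T := Localization.Construction.lift (toIndC T) hinv
  have hF : locQ T ⋙ F = toIndC T := Localization.Construction.fac _ _
  let G : IndC T ⥤ LocCat T :=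
    { obj := fun x => (locQ T).obj x.as
      map := fun {x y} _ => inv (c x.as) ≫ c y.as
      map_id := fun x => by simp
      map_comp := fun {x y z} f g => by simp }
  have hGmap : ∀ (u v : IndC T) (pp : u ⟶ v), G.map pp = inv (c u.as) ≫ c v.as :=
    fun _ _ _ => rfl
  have hFG : F ⋙ G = 𝟭 _ := by
    apply Localization.Construction.uniq
    have clemma : ∀ {a b : T} (h : a = b),
        c a = c b ≫ eqToHom (congrArg (locQ T).obj h.symm) := by
      intro a b h; subst h; simp
    apply Functor.hext
    · intro x
      have h1 := Functor.congr_obj hF x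
      simp only [Functor.comp_obj] at h1
      show G.obj (F.obj ((locQ T).obj x)) = (locQ T).obj x
      rw [h1]
      rfl
    · intro x y f
      show HEq (G.map (F.map ((locQ T).map f))) ((locQ T).map f)
      have h1 := Functor.congr_obj hF x
      have h2 := Functor.congr_obj hF y
      simp only [Functor.comp_obj] at h1 h2
      have e1 : (F.obj ((locQ T).obj x)).as = x := congrArg IndC.as h1
      have e2 : (F.obj ((locQ T).obj y)).as = y := congrArg IndC.as h2
      rw [hGmap, clemma e1, clemma e2, ← hc f]
      simp
  unfold IsTree IsIndiscrete
  intro u v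
  have hu := Functor.congr_obj hFG u
  have hv := Functor.congr_obj hFG v
  simp only [Functor.comp_obj, Functor.id_obj] at hu hv
  refine ⟨eqToHom hu.symm ≫ G.map (X := F.obj u) (Y := F.obj v) PUnit.unit ≫ eqToHom hv,
    trivial, ?_⟩
  intro g _
  have hcg := Functor.congr_hom hFG g
  simp only [Functor.comp_map, Functor.id_map] at hcg
  have hg : g = eqToHom hu.symm ≫ G.map (F.map g) ≫ eqToHom hv := by
    rw [hcg]
    simp
  have hsub : F.map g = (PUnit.unit : F.obj u ⟶ F.obj v) := Subsingleton.elim _ _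
  rw [hg, hsub]

/-- Conjugated image in the localization of the target of a morphism in the
localization of the source. -/
noncomputable def conjMap {D : Type u} [Category.{v} D] {C : Type u} [Category.{v} C]
    (F : D ⥤ C) {a b : D} (t : (locQ D).obj a ⟶ (locQ D).obj b) :
    (locQ C).obj (F.obj a) ⟶ (locQ C).obj (F.obj b) :=
  eqToHom (locMap_obj F a).symm ≫ (locMap F).map t ≫ eqToHom (locMap_obj F b)

section conjMap

variable {D : Type u} [Category.{v} D] {C : Type u} [Category.{v} C] (F : D ⥤ C)

theorem conjMap_id (a : D) : conjMap F (𝟙 ((locQ D).obj a)) = 𝟙 _ := by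
  simp [conjMap]

theorem conjMap_comp {a b c : D} (t : (locQ D).obj a ⟶ (locQ D).obj b)
    (t' : (locQ D).obj b ⟶ (locQ D).obj c) :
    conjMap F (t ≫ t') = conjMap F t ≫ conjMap F t' := by
  simp [conjMap]

theorem conjMap_map {a b : D} (f : a ⟶ b) :
    conjMap F ((locQ D).map f) = (locQ C).map (F.map f) := by
  have h : locQ D ⋙ locMap F = F ⋙ locQ C := Localization.Construction.fac _ _
  have h2 := Functor.congr_hom h f
  simp only [Functor.comp_map] at h2
  show eqToHom _ ≫ (locMap F).map ((locQ D).map f) ≫ eqToHom _ = _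
  rw [h2]
  simp

theorem conjMap_inv {a b : D} (t : (locQ D).obj a ⟶ (locQ D).obj b) :
    conjMap F (inv t) = inv (conjMap F t) := by
  symm
  apply IsIso.inv_eq_of_hom_inv_id
  rw [← conjMap_comp, IsIso.hom_inv_id, conjMap_id]

end conjMap

end Auxiliary


/-! ### The construction of the maximal tree -/

section Construction

set_option linter.unusedSectionVars false

attribute [local instance] Classical.propDecidable

variable {X : Type u} [Preorder X] [IsConnected X] (A : Set X) (x₀ : X)

/-- Zigzag equivalence inside the subspace `A` (and equality elsewhere). -/
def SimA (x y : X) : Prop :=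
  x = y ∨ ∃ (hx : x ∈ A) (hy : y ∈ A), Zigzag (⟨x, hx⟩ : ↥A) ⟨y, hy⟩

theorem SimA.refl' (x : X) : SimA A x x := Or.inl rfl

theorem SimA.symm' {x y : X} (h : SimA A x y) : SimA A y x := by
  rcases h with h | ⟨hx, hy, h⟩
  · exact Or.inl h.symm
  · exact Or.inr ⟨hy, hx, h.symm⟩

theorem SimA.trans' {x y z : X} (h : SimA A x y) (h' : SimA A y z) : SimA A x z := by
  rcases h with rfl | ⟨hx, hy, h⟩
  · exact h'
  · rcases h' with rfl | ⟨hy', hz, h'⟩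
    · exact Or.inr ⟨hx, hy, h⟩
    · exact Or.inr ⟨hx, hz, h.trans h'⟩

/-- The setoid of `SimA`. -/
def simSetoid : Setoid X :=
  ⟨SimA A, ⟨SimA.refl' A, fun h => SimA.symm' A h, fun h h' => SimA.trans' A h h'⟩⟩

/-- A choice of representative in each `SimA`-class. -/
noncomputable def repA (x : X) : X := (Quotient.mk (simSetoid A) x).out

theorem repA_sim (x : X) : SimA A (repA A x) x := by
  have h : Quotient.mk (simSetoid A) ((Quotient.mk (simSetoid A) x).out) =
      Quotient.mk (simSetoid A) x := Quotient.out_eq _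
  exact Quotient.exact h

theorem repA_eq {x y : X} (h : SimA A x y) : repA A x = repA A y := by
  unfold repA
  rw [Quotient.sound (s := simSetoid A) h]

/-- Reachability from the base point in at most `n` zigzag steps, where moving within a
`SimA`-class is free. -/
def RC : ℕ → X → Prop
  | 0, x => SimA A x₀ x
  | n + 1, x => RC n x ∨ ∃ u v, RC n u ∧ Zag u v ∧ SimA A v x

theorem RC.sim : ∀ {n : ℕ} {x y : X}, RC A x₀ n x → SimA A x y → RC A x₀ n y := by
  intro n
  induction n with
  | zero => intro x y h h'; exact SimA.trans' A h h'
  | succ n ih =>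
    intro x y h h'
    rcases h with h | ⟨u, v, h1, h2, h3⟩
    · exact Or.inl (ih h h')
    · exact Or.inr ⟨u, v, h1, h2, SimA.trans' A h3 h'⟩

theorem RC.exists_ (x : X) : ∃ n, RC A x₀ n x := by
  have hz : Zigzag x₀ x := isPreconnected_zigzag x₀ x
  induction hz with
  | refl => exact ⟨0, Or.inl rfl⟩
  | tail hab hbc ih =>
    obtain ⟨n, hn⟩ := ih
    exact ⟨n + 1, Or.inr ⟨_, _, hn, hbc, SimA.refl' A _⟩⟩

/-- The level of the `SimA`-class of `x`. -/
noncomputable def cdep (x : X) : ℕ := Nat.find (RC.exists_ A x₀ x)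

theorem cdep_spec (x : X) : RC A x₀ (cdep A x₀ x) x := by
  unfold cdep
  exact Nat.find_spec (RC.exists_ A x₀ x)

theorem cdep_le {n : ℕ} {x : X} (h : RC A x₀ n x) : cdep A x₀ x ≤ n := by
  unfold cdep
  exact Nat.find_min' _ h

theorem cdep_sim {x y : X} (h : SimA A x y) : cdep A x₀ x = cdep A x₀ y :=
  le_antisymm (cdep_le A x₀ (RC.sim A x₀ (cdep_spec A x₀ y) (SimA.symm' A h)))
    (cdep_le A x₀ (RC.sim A x₀ (cdep_spec A x₀ x) h))

/-- Reachability within `A` in at most `n` zag steps. -/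
def RA : ℕ → X → X → Prop
  | 0, x, y => x = y
  | n + 1, x, y => RA n x y ∨
      ∃ z, ∃ (hz : z ∈ A), ∃ (hy : y ∈ A), RA n x z ∧ Zag (⟨z, hz⟩ : ↥A) ⟨y, hy⟩

theorem RA.exists_ : ∀ (a b : ↥A), Zigzag a b → ∃ n, RA A n a.1 b.1 := by
  intro a b h
  induction h with
  | refl => exact ⟨0, rfl⟩
  | @tail b c hab hbc ih =>
    obtain ⟨n, hn⟩ := ih
    exact ⟨n + 1, Or.inr ⟨b.1, b.2, c.2, hn, hbc⟩⟩

theorem connector_exists (x : X) (h : cdep A x₀ x ≠ 0) :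
    ∃ u v, RC A x₀ (cdep A x₀ x - 1) u ∧ Zag u v ∧ SimA A v x := by
  obtain ⟨m, hm⟩ := Nat.exists_eq_succ_of_ne_zero h
  have hs := cdep_spec A x₀ x
  rw [hm] at hs
  rcases hs with hs | ⟨u, v, h1, h2, h3⟩
  · exact absurd (cdep_le A x₀ hs) (by omega)
  · rw [hm]
    exact ⟨u, v, by simpa using h1, h2, h3⟩

/-- A choice of a connecting edge `(u, v)` for the class of `x`:  `u` is at the previous
level, `v` is in the class of `x` and there is a zag from `u` to `v`. -/
noncomputable def connUV (x : X) : X × X :=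
  if h : cdep A x₀ (repA A x) ≠ 0 then
    ((connector_exists A x₀ (repA A x) h).choose,
     (connector_exists A x₀ (repA A x) h).choose_spec.choose)
  else (x₀, x₀)

theorem connUV_spec (x : X) (h : cdep A x₀ x ≠ 0) :
    cdep A x₀ (connUV A x₀ x).1 < cdep A x₀ x ∧ Zag (connUV A x₀ x).1 (connUV A x₀ x).2 ∧
      SimA A (connUV A x₀ x).2 x := by
  have hr : cdep A x₀ (repA A x) = cdep A x₀ x := cdep_sim A x₀ (repA_sim A x)
  have h' : cdep A x₀ (repA A x) ≠ 0 := by rw [hr]; exact h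
  rw [connUV, dif_pos h']
  dsimp only
  obtain ⟨h1, h2, h3⟩ := (connector_exists A x₀ (repA A x) h').choose_spec.choose_spec
  have hle := cdep_le A x₀ h1
  exact ⟨by omega, h2, SimA.trans' A h3 (repA_sim A x)⟩

theorem connUV_sim {x y : X} (h : SimA A x y) : connUV A x₀ x = connUV A x₀ y := by
  simp only [connUV, repA_eq A h]

/-- The entry point of the class of `x` in the spanning tree. -/
noncomputable def entry (x : X) : X :=
  if cdep A x₀ x = 0 then x₀ else (connUV A x₀ x).2

theorem entry_sim {x y : X} (h : SimA A x y) : entry A x₀ x = entry A x₀ y := by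
  unfold entry
  rw [cdep_sim A x₀ h, connUV_sim A x₀ h]

theorem entry_simA (x : X) : SimA A (entry A x₀ x) x := by
  unfold entry
  split
  · next h =>
    have hs := cdep_spec A x₀ x
    rw [h] at hs
    exact hs
  · next h => exact (connUV_spec A x₀ x h).2.2

theorem RA_exists_entry (x : X) (h : x ≠ entry A x₀ x) :
    ∃ n, RA A n (entry A x₀ x) x := by
  rcases entry_simA A x₀ x with he | ⟨h1, h2, hz⟩
  · exact absurd he.symm h
  · exact RA.exists_ A ⟨_, h1⟩ ⟨_, h2⟩ hz

/-- The depth of `x` inside its class, measured from the entry point. -/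
noncomputable def adep (x : X) : ℕ :=
  if h : x = entry A x₀ x then 0 else Nat.find (RA_exists_entry A x₀ x h)

theorem adep_zero {x : X} (h : adep A x₀ x = 0) : x = entry A x₀ x := by
  by_contra hne
  rw [adep, dif_neg hne] at h
  have hs := Nat.find_spec (RA_exists_entry A x₀ x hne)
  rw [h] at hs
  exact hne hs.symm

theorem cdep_x₀ : cdep A x₀ x₀ = 0 :=
  Nat.le_zero.mp (cdep_le A x₀ (SimA.refl' A x₀))

theorem entry_x₀ : entry A x₀ x₀ = x₀ := by
  rw [entry, if_pos (cdep_x₀ A x₀)]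

theorem adep_x₀ : adep A x₀ x₀ = 0 := by
  rw [adep, dif_pos (entry_x₀ A x₀).symm]

theorem eq_x₀ {x : X} (h1 : adep A x₀ x = 0) (h2 : cdep A x₀ x = 0) : x = x₀ := by
  have h := adep_zero A x₀ h1
  rwa [entry, if_pos h2] at h

theorem adep_spec {x : X} (h : x ≠ entry A x₀ x) :
    RA A (adep A x₀ x) (entry A x₀ x) x := by
  unfold adep
  rw [dif_neg h]
  exact Nat.find_spec (RA_exists_entry A x₀ x h)

theorem adep_le {n : ℕ} {x : X} (hn : RA A n (entry A x₀ x) x) :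
    adep A x₀ x ≤ n := by
  unfold adep
  split
  · omega
  · exact Nat.find_min' _ hn

theorem parentA_exists (x : X) (h : adep A x₀ x ≠ 0) :
    ∃ z, (∃ (hz : z ∈ A) (hx : x ∈ A), Zag (⟨z, hz⟩ : ↥A) ⟨x, hx⟩) ∧ SimA A z x ∧
      adep A x₀ z < adep A x₀ x ∧ entry A x₀ z = entry A x₀ x := by
  have hne : x ≠ entry A x₀ x := fun he => h (by rw [adep, dif_pos he])
  have hspec : RA A (adep A x₀ x) (entry A x₀ x) x := adep_spec A x₀ hne
  obtain ⟨m, hm⟩ := Nat.exists_eq_succ_of_ne_zero h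
  rw [hm] at hspec
  rcases hspec with hs | ⟨z, hz, hx, h1, h2⟩
  · have := adep_le A x₀ hs
    omega
  · have hsim : SimA A z x := Or.inr ⟨hz, hx, Zigzag.of_zag h2⟩
    have hent : entry A x₀ z = entry A x₀ x := entry_sim A x₀ hsim
    refine ⟨z, ⟨hz, hx, h2⟩, hsim, ?_, hent⟩
    have : adep A x₀ z ≤ m := adep_le A x₀ (by rw [hent]; exact h1)
    omega

/-- The parent of a vertex in the spanning tree. -/
noncomputable def par (x : X) : X :=
  if h : adep A x₀ x ≠ 0 then (parentA_exists A x₀ x h).choose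
  else if h2 : cdep A x₀ x ≠ 0 then (connUV A x₀ x).1
  else x₀

theorem par_specA {x : X} (h : adep A x₀ x ≠ 0) :
    (∃ (hz : par A x₀ x ∈ A) (hx : x ∈ A), Zag (⟨par A x₀ x, hz⟩ : ↥A) ⟨x, hx⟩) ∧
    adep A x₀ (par A x₀ x) < adep A x₀ x ∧ cdep A x₀ (par A x₀ x) = cdep A x₀ x ∧
    entry A x₀ (par A x₀ x) = entry A x₀ x := by
  rw [par, dif_pos h]
  obtain ⟨h1, hsim, h3, h4⟩ := (parentA_exists A x₀ x h).choose_spec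
  exact ⟨h1, h3, cdep_sim A x₀ hsim, h4⟩

theorem par_specC {x : X} (ha : adep A x₀ x = 0) (hc : cdep A x₀ x ≠ 0) :
    Zag (par A x₀ x) x ∧ cdep A x₀ (par A x₀ x) < cdep A x₀ x := by
  have hx : x = (connUV A x₀ x).2 := by
    have h := adep_zero A x₀ ha
    rwa [entry, if_neg hc] at h
  rw [par, dif_neg (by simp [ha]), dif_pos hc]
  obtain ⟨h1, h2, h3⟩ := connUV_spec A x₀ x hc
  constructor
  · rwa [← hx] at h2
  · exact h1

theorem zagA_to_zag {a b : ↥A} (h : Zag a b) : Zag a.1 b.1 := by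
  rcases h with ⟨⟨f⟩⟩ | ⟨⟨f⟩⟩
  · exact Or.inl ⟨(inclFunctor A).map f⟩
  · exact Or.inr ⟨(inclFunctor A).map f⟩

theorem par_zag {x : X} (h : x ≠ x₀) : Zag (par A x₀ x) x := by
  by_cases ha : adep A x₀ x = 0
  · by_cases hc : cdep A x₀ x = 0
    · exact absurd (eq_x₀ A x₀ ha hc) h
    · exact (par_specC A x₀ ha hc).1
  · obtain ⟨⟨hz, hx, hzag⟩, _⟩ := par_specA A x₀ ha
    exact zagA_to_zag A hzag

/-- Adjacency in the spanning tree. -/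
def TreeAdj (x y : X) : Prop :=
  (x ≠ x₀ ∧ y = par A x₀ x) ∨ (y ≠ x₀ ∧ x = par A x₀ y)

/-- The morphisms of the spanning tree: composites of tree edges. -/
def TRel : X → X → Prop :=
  Relation.ReflTransGen (fun u v => Nonempty (u ⟶ v) ∧ TreeAdj A x₀ u v)

/-- The spanning tree, as a wide subcategory of `X`. -/
def theTree : Subcat X where
  objs := Set.univ
  homs x y := {_f | TRel A x₀ x y}
  src_mem _ := Set.mem_univ _
  tgt_mem _ := Set.mem_univ _
  id_mem _ _ := Relation.ReflTransGen.refl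
  comp_mem hf hg := Relation.ReflTransGen.trans hf hg

theorem TRel_le {x y : X} (h : TRel A x₀ x y) : Nonempty (x ⟶ y) := by
  induction h with
  | refl => exact ⟨𝟙 x⟩
  | tail _ hstep ih => exact ⟨ih.some ≫ hstep.1.some⟩

/-- Shorthand for objects of the tree category. -/
def TObj (x : X) : (theTree A x₀).carrier := ⟨x, Set.mem_univ x⟩

/-- Constructor for morphisms of the tree category. -/
def THom {x y : X} (f : x ⟶ y) (h : TRel A x₀ x y) : TObj A x₀ x ⟶ TObj A x₀ y := ⟨f, h⟩

/-- The edge of the tree connecting `par x` to `x`, in the localization of the tree. -/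
noncomputable def stepT (x : X) (hx : x ≠ x₀) :
    (locQ (theTree A x₀).carrier).obj (TObj A x₀ (par A x₀ x)) ⟶
      (locQ (theTree A x₀).carrier).obj (TObj A x₀ x) :=
  if h : Nonempty ((par A x₀ x : X) ⟶ x) then
    (locQ (theTree A x₀).carrier).map
      (THom A x₀ h.some (Relation.ReflTransGen.single ⟨h, Or.inr ⟨hx, rfl⟩⟩))
  else
    inv ((locQ (theTree A x₀).carrier).map
      (THom A x₀ ((par_zag A x₀ hx).resolve_left h).some
        (Relation.ReflTransGen.single ⟨(par_zag A x₀ hx).resolve_left h, Or.inl ⟨hx, rfl⟩⟩)))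

/-- The coherent family of tree arrows from the root. -/
noncomputable def cT (x : X) :
    ((locQ (theTree A x₀).carrier).obj (TObj A x₀ x₀) ⟶
      (locQ (theTree A x₀).carrier).obj (TObj A x₀ x)) :=
  if hx : x = x₀ then eqToHom (by rw [hx]) else
    cT (par A x₀ x) ≫ stepT A x₀ x hx
termination_by (cdep A x₀ x, adep A x₀ x)
decreasing_by
  by_cases ha : adep A x₀ x = 0
  · have hc : cdep A x₀ x ≠ 0 := fun hc => hx (eq_x₀ A x₀ ha hc)
    exact Prod.Lex.left _ _ (par_specC A x₀ ha hc).2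
  · obtain ⟨_, h2, h3, _⟩ := par_specA A x₀ ha
    rw [h3]
    exact Prod.Lex.right _ h2

theorem cT_x₀ : cT A x₀ x₀ = 𝟙 _ := by
  rw [cT, dif_pos rfl]
  simp

theorem cT_ne {x : X} (hx : x ≠ x₀) :
    cT A x₀ x = cT A x₀ (par A x₀ x) ≫ stepT A x₀ x hx := by
  conv_lhs => rw [cT]
  rw [dif_neg hx]


theorem QT_comp_eq_id {a b : (theTree A x₀).carrier} (f : a ⟶ b) (g : b ⟶ a) :
    (locQ (theTree A x₀).carrier).map f ≫ (locQ (theTree A x₀).carrier).map g = 𝟙 _ := by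
  rw [← Functor.map_comp, Subsingleton.elim (f ≫ g) (𝟙 a)]
  simp

theorem QT_eq {a b : (theTree A x₀).carrier} (f g : a ⟶ b) :
    (locQ (theTree A x₀).carrier).map f = (locQ (theTree A x₀).carrier).map g :=
  congrArg _ (Subsingleton.elim f g)

theorem cT_step {z y : X} (hadj : TreeAdj A x₀ z y) (s : TObj A x₀ z ⟶ TObj A x₀ y) :
    cT A x₀ z ≫ (locQ (theTree A x₀).carrier).map s = cT A x₀ y := by
  rcases hadj with ⟨hz, hy⟩ | ⟨hy, hz⟩
  · subst hy
    rw [cT_ne A x₀ hz, Category.assoc]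
    have h : stepT A x₀ z hz ≫ (locQ (theTree A x₀).carrier).map s = 𝟙 _ := by
      unfold stepT
      split
      · next hpos => exact QT_comp_eq_id A x₀ _ s
      · next hneg =>
        rw [inv_comp_eq_id]
        exact QT_eq A x₀ s _
    rw [h, Category.comp_id]
  · subst hz
    rw [cT_ne A x₀ hy]
    congr 1
    unfold stepT
    split
    · next hpos => exact congrArg _ (Subsingleton.elim _ _)
    · next hneg =>
      symm
      apply IsIso.inv_eq_of_hom_inv_id
      exact QT_comp_eq_id A x₀ _ s

theorem cT_coh (a b : (theTree A x₀).carrier) (f : a ⟶ b) :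
    cT A x₀ a.1 ≫ (locQ (theTree A x₀).carrier).map f = cT A x₀ b.1 := by
  suffices H : ∀ (x y : X), TRel A x₀ x y →
      ∀ (g : TObj A x₀ x ⟶ TObj A x₀ y),
        cT A x₀ x ≫ (locQ (theTree A x₀).carrier).map g = cT A x₀ y by
    exact H a.1 b.1 f.2 f
  intro x y h
  induction h with
  | refl =>
    intro g
    rw [Subsingleton.elim g (𝟙 _)]
    simp
  | @tail z y' hxz hstep ih =>
    intro g
    have hf' : Nonempty (x ⟶ z) := TRel_le A x₀ hxz
    have hcomp : g = THom A x₀ hf'.some hxz ≫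
        THom A x₀ hstep.1.some (Relation.ReflTransGen.single hstep) :=
      Subsingleton.elim _ _
    rw [hcomp, Functor.map_comp, ← Category.assoc, ih (THom A x₀ hf'.some hxz),
      cT_step A x₀ hstep.2 _]

/-- The pushforward to `LX` of the coherent family of tree arrows. -/
noncomputable def pX (x : X) : (locQ X).obj x₀ ⟶ (locQ X).obj x :=
  conjMap (theTree A x₀).incl (cT A x₀ x)

theorem pX_x₀ : pX A x₀ x₀ = 𝟙 _ := by
  unfold pX
  rw [cT_x₀]
  exact conjMap_id _ _

theorem pX_ne {x : X} (hx : x ≠ x₀) :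
    pX A x₀ x = pX A x₀ (par A x₀ x) ≫ conjMap (theTree A x₀).incl (stepT A x₀ x hx) := by
  unfold pX
  rw [cT_ne A x₀ hx, conjMap_comp]
  rfl

theorem stepT_imgA {x : X} (hxn : x ≠ x₀) (hpz : par A x₀ x ∈ A) (hx : x ∈ A) :
    ∃ δ : (locQ ↥A).obj ⟨par A x₀ x, hpz⟩ ⟶ (locQ ↥A).obj ⟨x, hx⟩,
      conjMap (theTree A x₀).incl (stepT A x₀ x hxn) = conjMap (inclFunctor A) δ := by
  unfold stepT
  split
  · next hpos =>
    have hle : (⟨par A x₀ x, hpz⟩ : ↥A) ≤ ⟨x, hx⟩ :=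
      Subtype.mk_le_mk.mpr (leOfHom hpos.some)
    refine ⟨(locQ ↥A).map (homOfLE hle), ?_⟩
    rw [conjMap_map, conjMap_map]
    exact congrArg _ (Subsingleton.elim _ _)
  · next hneg =>
    have hle : (⟨x, hx⟩ : ↥A) ≤ ⟨par A x₀ x, hpz⟩ :=
      Subtype.mk_le_mk.mpr (leOfHom ((par_zag A x₀ hxn).resolve_left hneg).some)
    refine ⟨inv ((locQ ↥A).map (homOfLE hle)), ?_⟩
    rw [conjMap_inv, conjMap_map, conjMap_inv, conjMap_map]
    exact congrArg (fun (t : x ⟶ par A x₀ x) => inv ((locQ X).map t))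
      (Subsingleton.elim _ _)

theorem keyA : ∀ (n : ℕ) (x : X) (hx : x ∈ A), adep A x₀ x = n →
    ∃ (he : entry A x₀ x ∈ A)
      (γ : (locQ ↥A).obj ⟨entry A x₀ x, he⟩ ⟶ (locQ ↥A).obj ⟨x, hx⟩),
      pX A x₀ x = pX A x₀ (entry A x₀ x) ≫ conjMap (inclFunctor A) γ := by
  intro n
  induction n using Nat.strong_induction_on with
  | _ n ih =>
    intro x hx hn
    rcases Nat.eq_zero_or_pos n with h0 | hpos
    · subst h0
      have hex : entry A x₀ x = x := (adep_zero A x₀ hn).symm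
      rw [hex]
      exact ⟨hx, 𝟙 _, by rw [conjMap_id]; exact (Category.comp_id _).symm⟩
    · have hne : adep A x₀ x ≠ 0 := by omega
      obtain ⟨⟨hpz, hx', hzag⟩, hlt, hcd, hent⟩ := par_specA A x₀ hne
      have hxn : x ≠ x₀ := fun he => hne (by rw [he]; exact adep_x₀ A x₀)
      obtain ⟨he, γ₀, hγ₀⟩ := ih (adep A x₀ (par A x₀ x)) (by omega) (par A x₀ x) hpz rfl
      obtain ⟨δ, hδ⟩ := stepT_imgA A x₀ hxn hpz hx
      rw [← hent]
      refine ⟨he, γ₀ ≫ δ, ?_⟩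
      rw [pX_ne A x₀ hxn, hγ₀, hδ, conjMap_comp]
      exact Category.assoc _ _ _

theorem keyA' (x : X) (hx : x ∈ A) {e : X} (hee : entry A x₀ x = e) (he : e ∈ A) :
    ∃ γ : (locQ ↥A).obj ⟨e, he⟩ ⟶ (locQ ↥A).obj ⟨x, hx⟩,
      pX A x₀ x = pX A x₀ e ≫ conjMap (inclFunctor A) γ := by
  subst hee
  obtain ⟨he', γ, hγ⟩ := keyA A x₀ (adep A x₀ x) x hx rfl
  exact ⟨γ, hγ⟩

end Construction

/-- Let `X` be a connected Alexandroff space (viewed as a preorder/thin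
category) and `A` a subspace such that the inclusion `A ↪ X` induces the trivial map
`π₁(A,a) → π₁(X,a)` (i.e. `Aut_{LA}(a) → Aut_{LX}(a)`) for every `a ∈ A`.  Then there is a
maximal tree `T` of `X` such that `F_T : X → π₁(X,x₀)` is trivial on `A`: for every family
`τ` of tree arrows of `T` (in `LX`), `F_T` sends each relation `a ≤ a'` in `A` to the
identity. -/
theorem stmt_18 {X : Type u} [Preorder X] [IsConnected X] (A : Set X) (x₀ : X)
    (htriv : ∀ (a : ↥A) (γ : (locQ ↥A).obj a ⟶ (locQ ↥A).obj a),
      eqToHom (locMap_obj (inclFunctor A) a).symm ≫ (locMap (inclFunctor A)).map γ ≫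
          eqToHom (locMap_obj (inclFunctor A) a) =
        𝟙 ((locQ X).obj a.1)) :
    ∃ T : Subcat X, T.objs = Set.univ ∧ IsTree T.carrier ∧
      ∀ τ : ∀ a b : X, ((locQ X).obj a ⟶ (locQ X).obj b),
        (∀ (a b : X) (ha : a ∈ T.objs) (hb : b ∈ T.objs)
          (t : (locQ T.carrier).obj ⟨a, ha⟩ ⟶ (locQ T.carrier).obj ⟨b, hb⟩),
          τ a b = eqToHom (locMap_obj T.incl ⟨a, ha⟩).symm ≫ (locMap T.incl).map t ≫
            eqToHom (locMap_obj T.incl ⟨b, hb⟩)) →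
        ∀ (a a' : X), a ∈ A → a' ∈ A → ∀ f : a ⟶ a',
          τ x₀ a ≫ (locQ X).map f ≫ τ a' x₀ = 𝟙 ((locQ X).obj x₀) := by
  refine ⟨theTree A x₀, rfl, ?_, ?_⟩
  · exact isTree_of_coherent (TObj A x₀ x₀) (fun a => cT A x₀ a.1)
      (fun {a b} f => cT_coh A x₀ a b f)
  · intro τ hτ a a' ha ha' f
    have hτab : ∀ (b c : X), τ b c = inv (pX A x₀ b) ≫ pX A x₀ c := by
      intro b c
      haveI : IsIso (cT A x₀ b) := locCat_isIso _
      have h := hτ b c (Set.mem_univ b) (Set.mem_univ c)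
        (inv (I := locCat_isIso (cT A x₀ b)) (cT A x₀ b) ≫ cT A x₀ c)
      rw [h]
      show conjMap (theTree A x₀).incl (inv (cT A x₀ b) ≫ cT A x₀ c) = _
      rw [conjMap_comp, conjMap_inv]
      rfl
    have hsim : SimA A a a' := Or.inr ⟨ha, ha',
      Zigzag.of_hom (homOfLE (Subtype.mk_le_mk.mpr (leOfHom f)))⟩
    obtain ⟨he, γ, hγ⟩ := keyA A x₀ (adep A x₀ a) a ha rfl
    obtain ⟨γ', hγ'⟩ := keyA' A x₀ a' ha' (entry_sim A x₀ hsim).symm he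
    have hQf : (locQ X).map f = conjMap (inclFunctor A)
        ((locQ ↥A).map (homOfLE (Subtype.mk_le_mk.mpr (leOfHom f)) :
          (⟨a, ha⟩ : ↥A) ⟶ ⟨a', ha'⟩)) := by
      rw [conjMap_map]
      exact congrArg _ (Subsingleton.elim _ _)
    have hkey : pX A x₀ a ≫ (locQ X).map f = pX A x₀ a' := by
      rw [hγ, hγ', hQf]
      refine (Category.assoc _ _ _).trans ((congrArg _ (conjMap_comp _ _ _).symm).trans ?_)
      congr 1
      have h3 : conjMap (inclFunctor A)
          ((γ ≫ (locQ ↥A).map (homOfLE (Subtype.mk_le_mk.mpr (leOfHom f)) :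
            (⟨a, ha⟩ : ↥A) ⟶ ⟨a', ha'⟩)) ≫ inv γ') =
          𝟙 ((locQ X).obj (entry A x₀ a)) :=
        htriv ⟨entry A x₀ a, he⟩ _
      rw [conjMap_comp, conjMap_inv] at h3
      have h4 := congrArg (fun t => t ≫ conjMap (inclFunctor A) γ') h3
      have h5 := h4.trans (Category.id_comp _)
      simp at h5
      exact h5
    rw [hτab, hτab, pX_x₀]
    simp only [IsIso.inv_id, Category.id_comp, Category.comp_id]
    rw [← Category.assoc, hkey, IsIso.hom_inv_id]
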